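/- For every subspace W ⊆ D one has V(W^⊥) = (F⁻¹(W))^⊥, where F⁻¹(W) denotes the preimage of W under F. -/

import Mathlib

/-- Let `𝔽` be an algebraically closed field of characteristic `p` with
Frobenius `σ (x) = x ^ p`, and let `D` be a finite-dimensional `𝔽`-vector space equipped with a
non-degenerate alternating bilinear form `B`, a `σ`-semilinear map `F` and a `σ⁻¹`-semilinear
map `V` satisfying `im V = ker F`, `im F = ker V` and `⟨F x, y⟩ = ⟨x, V y⟩ ^ p`.
Then for every subspace `W ⊆ D` one has `V (W ^⊥) = (F⁻¹ (W)) ^⊥`. -/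
theorem stmt0 {p : ℕ} (hp : p.Prime) {𝔽 : Type*} [Field 𝔽] [IsAlgClosed 𝔽] [CharP 𝔽 p]
    {D : Type*} [AddCommGroup D] [Module 𝔽 D] [FiniteDimensional 𝔽 D]
    (B : D →ₗ[𝔽] D →ₗ[𝔽] 𝔽)
    (halt : ∀ x, B x x = 0)
    (hnd : ∀ x, (∀ y, B x y = 0) → x = 0)
    (F V : D → D)
    (hFadd : ∀ x y, F (x + y) = F x + F y)
    (hVadd : ∀ x y, V (x + y) = V x + V y)
    (hFsmul : ∀ (c : 𝔽) (x : D), F (c • x) = c ^ p • F x)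
    (hVsmul : ∀ (c : 𝔽) (x : D), V (c ^ p • x) = c • V x)
    (hVF : Set.range V = {x | F x = 0})
    (hFV : Set.range F = {x | V x = 0})
    (hpair : ∀ x y, B (F x) y = B x (V y) ^ p)
    (W : Submodule 𝔽 D) :
    V '' {x | ∀ y ∈ W, B x y = 0} = {x | ∀ y ∈ F ⁻¹' (W : Set D), B x y = 0} := by
  
  -- Basic consequences
  have hskew : ∀ x y : D, B x y = - B y x := by
    intro x y
    have h := halt (x + y)
    have hx := halt x
    have hy := halt y
    simp only [map_add, LinearMap.add_apply, hx, hy] at h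
    linear_combination h
  have hrefl : B.IsRefl := by
    intro x y h
    rw [hskew]; rw [h]; ring
  have hND : LinearMap.BilinForm.Nondegenerate B := hrefl.nondegenerate_iff_separatingLeft.mpr hnd
  have hppos : 0 < p := hp.pos
  have hV0 : V 0 = 0 := by
    have h := hVadd 0 0
    simp only [add_zero] at h
    exact left_eq_add.mp h
  have hFVy0 : ∀ y : D, F (V y) = 0 := by
    intro y
    have : V y ∈ {x | F x = 0} := hVF ▸ Set.mem_range_self y
    exact this
  have hVFy0 : ∀ y : D, V (F y) = 0 := by
    intro y
    have : F y ∈ {x | V x = 0} := hFV ▸ Set.mem_range_self y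
    exact this
  -- Submodule K = ker V = im F
  let K : Submodule 𝔽 D :=
    { carrier := {x | V x = 0}
      add_mem' := by
        intro a b ha hb
        show V (a + b) = 0
        rw [hVadd, ha, hb, add_zero]
      zero_mem' := hV0
      smul_mem' := by
        intro c x hx
        show V (c • x) = 0
        obtain ⟨d, hd⟩ := IsAlgClosed.exists_pow_nat_eq c hppos
        rw [← hd, hVsmul, hx, smul_zero] }
  -- Wp = orthogonal of W
  set Wp : Submodule 𝔽 D := LinearMap.BilinForm.orthogonal B W with hWp
  have hmemWp : ∀ x : D, x ∈ Wp ↔ ∀ y ∈ W, B x y = 0 := by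
    intro x
    constructor
    · intro h y hy
      rw [hskew, h y hy, neg_zero]
    · intro h y hy
      show B y x = 0
      rw [hskew, h y hy, neg_zero]
  ext z
  constructor
  · rintro ⟨x, hx, rfl⟩
    intro y hy
    have h1 : B (F y) x = 0 := by
      rw [hskew, hx (F y) hy, neg_zero]
    rw [hpair] at h1
    have h2 : B y (V x) = 0 := pow_eq_zero_iff hppos.ne' |>.mp h1
    rw [hskew, h2, neg_zero]
  · intro hz
    -- Step 1 : F z = 0
    have hFz : F z = 0 := by
      apply hnd
      intro y
      rw [hpair]
      have : B z (V y) = 0 := hz (V y) (by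
        show F (V y) ∈ (W : Set D)
        rw [hFVy0]; exact W.zero_mem)
      rw [this, zero_pow hppos.ne']
    obtain ⟨x, hx⟩ : z ∈ Set.range V := by rw [hVF]; exact hFz
    -- Step 2 : x ∈ K ⊔ Wp
    have hxS : x ∈ K ⊔ Wp := by
      rw [← LinearMap.BilinForm.orthogonal_orthogonal hND hrefl (K ⊔ Wp)]
      intro m hm
      -- m is orthogonal to K and to Wp
      have hmK : ∀ n ∈ K, B n m = 0 := fun n hn => hm n (Submodule.mem_sup_left hn)
      have hmWp : ∀ n ∈ Wp, B n m = 0 := fun n hn => hm n (Submodule.mem_sup_right hn)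
      -- V m = 0, hence m ∈ range F
      have hVm : V m = 0 := by
        have h1 : ∀ s : D, B s (V m) = 0 := by
          intro s
          have h2 : B (F s) m = 0 := hmK (F s) (hVFy0 s)
          rw [hpair] at h2
          exact pow_eq_zero_iff hppos.ne' |>.mp h2
        apply hnd
        intro s
        rw [hskew, h1 s, neg_zero]
      obtain ⟨s, hs⟩ : m ∈ Set.range F := by rw [hFV]; exact hVm
      -- m ∈ W
      have hmW : m ∈ W := by
        rw [← LinearMap.BilinForm.orthogonal_orthogonal hND hrefl W]
        intro n hn
        exact hmWp n hn
      -- conclude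
      have hBzs : B z s = 0 := hz s (by show F s ∈ (W : Set D); rw [hs]; exact hmW)
      show B m x = 0
      rw [← hs, hpair, hx, hskew, hBzs, neg_zero, zero_pow hppos.ne']
    obtain ⟨u, hu, w, hw, rfl⟩ := Submodule.mem_sup.mp hxS
    refine ⟨w, (hmemWp w).mp hw, ?_⟩
    rw [← hx, hVadd, hu, zero_add]
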